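/- Semantic characterization of normalization, converse direction: in the model E, if Γ ⊢_E M : α with ∅ ∉⁺ α and ∅ ∉⁻ Γ, then M has a β-normal form. -/

import Mathlib

/-- Untyped λ⊥-terms in de Bruijn notation, intrinsically scoped:
`Tm n` is the set of λ⊥-terms with free variables among `x₀,…,x_{n-1}`. -/
inductive Tm : ℕ → Type
  | var : ∀ {n : ℕ}, Fin n → Tm n
  | lam : ∀ {n : ℕ}, Tm (n + 1) → Tm n
  | app : ∀ {n : ℕ}, Tm n → Tm n → Tm n
  | bot : ∀ {n : ℕ}, Tm n

/-- Renaming of free variables. -/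
def Tm.rename : ∀ {n m : ℕ}, (Fin n → Fin m) → Tm n → Tm m
  | _, _, f, .var k => .var (f k)
  | _, m, f, .lam t =>
      .lam (t.rename fun k => Fin.cases (motive := fun _ => Fin (m + 1)) 0
        (fun j => (f j).succ) k)
  | _, _, f, .app t u => .app (t.rename f) (u.rename f)
  | _, _, _, .bot => .bot

/-- Simultaneous (capture-avoiding) substitution. -/
def Tm.subst : ∀ {n m : ℕ}, (Fin n → Tm m) → Tm n → Tm m
  | _, _, σ, .var k => σ k
  | _, m, σ, .lam t =>
      .lam (t.subst fun k => Fin.cases (motive := fun _ => Tm (m + 1)) (.var 0)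
        (fun j => (σ j).rename Fin.succ) k)
  | _, _, σ, .app t u => .app (t.subst σ) (u.subst σ)
  | _, _, _, .bot => .bot

/-- Substitution `M{N/y}` of `N` for the 0-th free variable of `M`. -/
def Tm.subst1 {n : ℕ} (M : Tm (n + 1)) (N : Tm n) : Tm n :=
  M.subst (Fin.cases (motive := fun _ => Tm n) N Tm.var)

/-- One-step β-reduction (contextual closure of `(λx.M)N → M{N/x}`). -/
inductive Beta : ∀ {n : ℕ}, Tm n → Tm n → Prop
  | redex {n} (M : Tm (n + 1)) (N : Tm n) : Beta (.app (.lam M) N) (M.subst1 N)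
  | appL {n} {M M' N : Tm n} : Beta M M' → Beta (.app M N) (.app M' N)
  | appR {n} {M N N' : Tm n} : Beta N N' → Beta (.app M N) (.app M N')
  | lam {n} {M M' : Tm (n + 1)} : Beta M M' → Beta (.lam M) (.lam M')

/-- A λ⊥-term is a λ-term when it contains no occurrence of `⊥`. -/
def BotFree : ∀ {n : ℕ}, Tm n → Prop
  | _, .var _ => True
  | _, .lam M => BotFree M
  | _, .app M N => BotFree M ∧ BotFree N
  | _, .bot => False

/-- The environment assigning the multiset `[α]` to the variable `k` and `0` elsewhere. -/
def single {D : Type} {n : ℕ} (k : Fin n) (α : D) : Fin n → Multiset D :=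
  fun j => if j = k then {α} else 0

/-- The relational interpretation `⟦M⟧_{x̄} ⊆ M_f(D)ⁿ × D` of a λ⊥-term in a relational
graph model `(D, i)`. -/
def Interp {D : Type} (i : Multiset D × D → D) :
    ∀ {n : ℕ}, Tm n → Set ((Fin n → Multiset D) × D)
  | _, .var k => {p | ∃ α, p = (single k α, α)}
  | _, .lam M => {p | ∃ Γ a α, (Fin.cons a Γ, α) ∈ Interp i M ∧ p = (Γ, i (a, α))}
  | n, .app M N =>
      {p | ∃ (Γ₀ : Fin n → Multiset D) (l : List ((Fin n → Multiset D) × D)),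
        (Γ₀, i (↑(l.map Prod.snd), p.2)) ∈ Interp i M ∧
        (∀ q ∈ l, q ∈ Interp i N) ∧ p.1 = Γ₀ + (l.map Prod.fst).sum}
  | _, .bot => ∅

/-- The non-idempotent intersection type system associated with a relational graph model
`(D, i)`: `Der i Γ M α m` states that the judgment `Γ ⊢ M : α` is derivable by a
derivation `π` with `#app(π) = m` occurrences of the application rule. -/
inductive Der {D : Type} (i : Multiset D × D → D) :
    ∀ {n : ℕ}, (Fin n → Multiset D) → Tm n → D → ℕ → Prop
  | var {n} (k : Fin n) (α : D) : Der i (single k α) (.var k) α 0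
  | lam {n} {Γ : Fin n → Multiset D} {a : Multiset D} {M : Tm (n + 1)} {α : D} {m : ℕ} :
      Der i (Fin.cons a Γ) M α m → Der i Γ (.lam M) (i (a, α)) m
  | app {n} {Γ : Fin n → Multiset D} {M N : Tm n} {α : D} {m : ℕ}
      (l : List ((Fin n → Multiset D) × D × ℕ)) :
      Der i Γ M (i (↑(l.map fun q => q.2.1), α)) m →
      (∀ q ∈ l, Der i q.1 N q.2.1 q.2.2) →
      Der i (Γ + (l.map fun q => q.1).sum) (.app M N) α
        (m + (l.map fun q => q.2.2).sum + 1)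

/-- Pre-types of the relational graph model `E`, the free completion of the partial pair
`(ℕ, ∅)`: atoms `ξ_k` and arrows `a → α` with `a` a finite multiset of pre-types
(represented as a list). -/
inductive PreE : Type
  | atom : ℕ → PreE
  | node : List PreE → PreE → PreE

/-- Permutation congruence on pre-types: lists represent finite multisets. -/
inductive EqvE : PreE → PreE → Prop
  | refl (t) : EqvE t t
  | symm {s t} : EqvE s t → EqvE t s
  | trans {s t u} : EqvE s t → EqvE t u → EqvE s u
  | perm {l₁ l₂ t} : List.Perm l₁ l₂ → EqvE (.node l₁ t) (.node l₂ t)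
  | congHead {l t₁ t₂} : EqvE t₁ t₂ → EqvE (.node l t₁) (.node l t₂)
  | congArg {x y l t} : EqvE x y → EqvE (.node (x :: l) t) (.node (y :: l) t)

def ESetoid : Setoid PreE := ⟨EqvE, ⟨EqvE.refl, EqvE.symm, EqvE.trans⟩⟩

/-- The set of elements (types) of the model `E`. -/
def ETy : Type := Quotient ESetoid

/-- The (injective) arrow constructor `i : M_f(E) × E → E` of the model `E`. -/
noncomputable def arrE (p : Multiset ETy × ETy) : ETy :=
  Quotient.mk ESetoid (PreE.node (p.1.toList.map Quotient.out) p.2.out)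

/-- Polarized occurrences of the empty multiset in a pre-type: `Occ true` is a positive
occurrence, `Occ false` a negative one.  The empty multiset occurs negatively in
`∅ → β`; occurrences in the target of an arrow keep their polarity; occurrences in a
member of the source multiset of an arrow flip their polarity. -/
inductive Occ : Bool → PreE → Prop
  | negEmpty (t) : Occ false (.node [] t)
  | tail {p l t} : Occ p t → Occ p (.node l t)
  | arg {p β l t} : Occ (!p) β → β ∈ l → Occ p (.node l t)

/-- Polarized occurrences of the empty multiset in an element of `E`. -/
def OccQ (p : Bool) (x : ETy) : Prop := ∃ t : PreE, x = Quotient.mk ESetoid t ∧ Occ p t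


section General

variable {D : Type} {i : Multiset D × D → D}

/-- Pushforward of an environment along a renaming. -/
def pushf {n m : ℕ} (f : Fin n → Fin m) (Γ : Fin n → Multiset D) : Fin m → Multiset D :=
  fun j => ∑ k : Fin n, if f k = j then Γ k else 0

lemma pushf_add {n m : ℕ} (f : Fin n → Fin m) (Γ Δ : Fin n → Multiset D) :
    pushf f (Γ + Δ) = pushf f Γ + pushf f Δ := by
  funext j
  simp only [pushf, Pi.add_apply, ← Finset.sum_add_distrib]
  exact Finset.sum_congr rfl fun k _ => by split <;> simp

lemma pushf_zero {n m : ℕ} (f : Fin n → Fin m) : pushf f (0 : Fin n → Multiset D) = 0 := by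
  funext j; simp [pushf]

lemma pushf_single {n m : ℕ} (f : Fin n → Fin m) (k : Fin n) (α : D) :
    pushf f (single k α) = single (f k) α := by
  funext j
  simp only [pushf, single]
  rw [Finset.sum_eq_single k]
  · split <;> simp_all [eq_comm]
  · intro b _ hb; simp [hb]
  · simp

lemma cons_add_cons {n : ℕ} (a b : Multiset D) (Γ Δ : Fin n → Multiset D) :
    (Fin.cons a Γ + Fin.cons b Δ : Fin (n+1) → Multiset D) = Fin.cons (a + b) (Γ + Δ) := by
  funext j
  refine Fin.cases ?_ ?_ j <;> simp

lemma single_succ {n : ℕ} (k : Fin n) (β : D) :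
    (single (Fin.succ k) β : Fin (n+1) → Multiset D) = Fin.cons 0 (single k β) := by
  funext j
  refine Fin.cases ?_ ?_ j
  · simp [single, (Fin.succ_ne_zero k).symm]
  · intro j; simp [single, Fin.succ_inj]

lemma single_zero {n : ℕ} (β : D) :
    (single (0 : Fin (n+1)) β) = Fin.cons {β} (0 : Fin n → Multiset D) := by
  funext j
  refine Fin.cases ?_ ?_ j
  · simp [single]
  · intro j; simp [single, Fin.succ_ne_zero]

lemma pushf_lift {n m : ℕ} (f : Fin n → Fin m) (a : Multiset D) (Γ : Fin n → Multiset D) :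
    pushf (fun k => Fin.cases (motive := fun _ => Fin (m + 1)) 0 (fun j => (f j).succ) k)
      (Fin.cons a Γ) = Fin.cons a (pushf f Γ) := by
  funext j
  refine Fin.cases ?_ ?_ j
  · simp only [pushf, Fin.cons_zero]
    rw [Fin.sum_univ_succ]
    simp [Fin.succ_ne_zero]
  · intro j
    simp only [pushf, Fin.cons_succ]
    rw [Fin.sum_univ_succ]
    simp [(Fin.succ_ne_zero j).symm, Fin.succ_inj]

lemma pushf_succ {n : ℕ} (Γ : Fin n → Multiset D) :
    pushf Fin.succ Γ = Fin.cons 0 Γ := by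
  funext j
  refine Fin.cases ?_ ?_ j
  · simp [pushf, Fin.succ_ne_zero]
  · intro j
    simp only [pushf, Fin.cons_succ]
    rw [Finset.sum_eq_single j]
    · simp
    · intro b _ hb; simp [Fin.succ_inj, hb]
    · simp

lemma pushf_list_sum {n m : ℕ} (f : Fin n → Fin m) {X : Type*} (g : X → (Fin n → Multiset D))
    (l : List X) : pushf f ((l.map g).sum) = (l.map (pushf f ∘ g)).sum := by
  induction l with
  | nil => simp [pushf_zero]
  | cons q l ihl => simp [pushf_add, ihl]

lemma der_cast {n : ℕ} {Γ Γ' : Fin n → Multiset D} {M : Tm n} {α : D} {m m' : ℕ}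
    (h : Der i Γ M α m) (hΓ : Γ = Γ') (hm : m = m') : Der i Γ' M α m' := hΓ ▸ hm ▸ h

theorem der_rename {n : ℕ} {Γ : Fin n → Multiset D} {M : Tm n} {α : D} {m : ℕ}
    (h : Der i Γ M α m) :
    ∀ {n' : ℕ} (f : Fin n → Fin n'), Der i (pushf f Γ) (M.rename f) α m := by
  induction h with
  | var k α => intro n' f; rw [pushf_single]; exact Der.var (f k) α
  | lam h ih =>
    intro n' f
    have := ih (fun k => Fin.cases (motive := fun _ => Fin (n' + 1)) 0 (fun j => (f j).succ) k)
    rw [pushf_lift] at this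
    exact Der.lam this
  | app l hM hN ihM ihN =>
    intro n' f
    refine der_cast (Der.app (i := i) (l := l.map (fun q => (pushf f q.1, q.2.1, q.2.2)))
      (by simpa [List.map_map, Function.comp_def] using ihM f) ?_) ?_ ?_
    · intro q hq
      simp only [List.mem_map] at hq
      obtain ⟨q', hq', rfl⟩ := hq
      exact ihN q' hq' f
    · rw [pushf_add, pushf_list_sum f (fun q => q.1) l, List.map_map]
      rfl
    · simp [List.map_map]; rfl

end General

section Subst

variable {D : Type} {i : Multiset D × D → D}

/-- A bag of derivations of the terms `σ k`, providing the multiset `Γ k` of types for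
each variable `k`, with total environment `Δ` and total measure `p`. -/
inductive Ders (i : Multiset D × D → D) {n n' : ℕ} (σ : Fin n → Tm n') :
    (Fin n' → Multiset D) → (Fin n → Multiset D) → ℕ → Prop
  | nil : Ders i σ 0 0 0
  | cons {Δ Γ p k β Δ' p'} : Der i Δ' (σ k) β p' → Ders i σ Δ Γ p →
      Ders i σ (Δ + Δ') (Γ + single k β) (p + p')

lemma Ders.cases_eq {n n' : ℕ} {σ : Fin n → Tm n'} {Δ : Fin n' → Multiset D}
    {Γ : Fin n → Multiset D} {p : ℕ} (h : Ders i σ Δ Γ p) :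
    (Γ = 0 ∧ Δ = 0 ∧ p = 0) ∨
      ∃ Δ₀ Γ₀ p₀ k β Δ' p', Der i Δ' (σ k) β p' ∧ Ders i σ Δ₀ Γ₀ p₀ ∧
        Δ = Δ₀ + Δ' ∧ Γ = Γ₀ + single k β ∧ p = p₀ + p' := by
  cases h with
  | nil => exact Or.inl ⟨rfl, rfl, rfl⟩
  | @cons Δ Γ p k β Δ' p' hd hs => exact Or.inr ⟨Δ, Γ, p, k, β, Δ', p', hd, hs, rfl, rfl, rfl⟩

lemma Ders.zero_inv {n n' : ℕ} {σ : Fin n → Tm n'} {Δ : Fin n' → Multiset D} {p : ℕ}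
    (h : Ders i σ Δ 0 p) : Δ = 0 ∧ p = 0 := by
  rcases h.cases_eq with ⟨_, h1, h2⟩ | ⟨Δ₀, Γ₀, p₀, k, β, Δ', p', _, _, _, hΓ, _⟩
  · exact ⟨h1, h2⟩
  · exfalso
    have := congrFun hΓ k
    simp [single] at this
    exact absurd this.symm (by simp)

lemma Ders.single_inv {n n' : ℕ} {σ : Fin n → Tm n'} {Δ : Fin n' → Multiset D}
    {k : Fin n} {α : D} {p : ℕ} (h : Ders i σ Δ (single k α) p) : Der i Δ (σ k) α p := by
  rcases h.cases_eq with ⟨hΓ, _, _⟩ | ⟨Δ₀, Γ₀, p₀, k', β, Δ', p', hd, hs, hΔ, hΓ, hp⟩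
  · exfalso
    have := congrFun hΓ k
    simp [single] at this
  · have hk : k' = k := by
      by_contra hne
      have := congrFun hΓ k'
      simp [single, hne] at this
      have hcard := congrArg Multiset.card this
      simp at hcard
    subst hk
    have h1 : Γ₀ k' + {β} = {α} := by simpa [single] using (congrFun hΓ k').symm
    rw [add_comm, Multiset.singleton_add] at h1
    have h1' := h1.symm
    rw [Multiset.singleton_eq_cons_iff] at h1'
    obtain ⟨hβ', hΓk⟩ := h1'
    have hβ : β = α := hβ'.symm
    have hΓk : Γ₀ k' = 0 := hΓk
    have hΓ0 : Γ₀ = 0 := by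
      funext j
      by_cases hj : j = k'
      · rw [hj]; exact hΓk
      · have := congrFun hΓ j
        simpa [single, hj] using this.symm
    subst hβ
    obtain ⟨h0, h00⟩ := Ders.zero_inv (hΓ0 ▸ hs)
    subst hΔ hp
    rw [h0, h00]
    simpa using hd

lemma Ders.split {n n' : ℕ} {σ : Fin n → Tm n'} {Δ : Fin n' → Multiset D}
    {Γ : Fin n → Multiset D} {p : ℕ} (h : Ders i σ Δ Γ p) :
    ∀ Γ₁ Γ₂, Γ = Γ₁ + Γ₂ →
      ∃ Δ₁ Δ₂ p₁ p₂, Ders i σ Δ₁ Γ₁ p₁ ∧ Ders i σ Δ₂ Γ₂ p₂ ∧ Δ = Δ₁ + Δ₂ ∧ p = p₁ + p₂ := by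
  classical
  induction h with
  | nil =>
    intro Γ₁ Γ₂ h12
    have h1 : Γ₁ = 0 := by
      funext j
      have h' : Γ₁ j + Γ₂ j = 0 := (congrFun h12 j).symm
      have : Γ₁ j ≤ 0 := h' ▸ Multiset.le_add_right _ _
      simpa using this
    have h2 : Γ₂ = 0 := by
      funext j
      have h' : Γ₁ j + Γ₂ j = 0 := (congrFun h12 j).symm
      have : Γ₂ j ≤ 0 := h' ▸ Multiset.le_add_left _ _
      simpa using this
    subst h1 h2
    exact ⟨0, 0, 0, 0, Ders.nil, Ders.nil, by simp, by simp⟩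
  | @cons Δ Γ p k β Δ' p' hd hs ih =>
    intro Γ₁ Γ₂ h12
    have hβmem : β ∈ Γ₁ k ∨ β ∈ Γ₂ k := by
      have h' : Γ k + {β} = Γ₁ k + Γ₂ k := by simpa [single] using congrFun h12 k
      have hβ : β ∈ Γ₁ k + Γ₂ k := by rw [← h']; simp
      simpa using hβ
    rcases hβmem with hβ1 | hβ2
    · refine ?_
      set Γ₁' : Fin n → Multiset D := fun j => if j = k then (Γ₁ k).erase β else Γ₁ j with hΓ₁'
      have hre : Γ₁ = Γ₁' + single k β := by
        funext j
        show Γ₁ j = Γ₁' j + single k β j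
        by_cases hj : j = k
        · subst hj
          simp only [hΓ₁', single, if_pos rfl]
          simp only [if_true]
          rw [add_comm, Multiset.singleton_add, Multiset.cons_erase hβ1]
        · simp [hΓ₁', single, hj]
      have hGa : Γ = Γ₁' + Γ₂ := by
        funext j
        show Γ j = Γ₁' j + Γ₂ j
        by_cases hj : j = k
        · subst hj
          have e1 : Γ j + {β} = Γ₁ j + Γ₂ j := by simpa [single] using congrFun h12 j
          have e2 : Γ₁ j = Γ₁' j + {β} := by
            have := congrFun hre j; simpa [single] using this
          have e3 : Γ j + {β} = (Γ₁' j + Γ₂ j) + {β} := by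
            rw [e1, e2, add_right_comm]
          exact add_right_cancel e3
        · have e1 : Γ j = Γ₁ j + Γ₂ j := by simpa [single, hj] using congrFun h12 j
          rw [e1, hΓ₁']; simp [hj]
      obtain ⟨Δ₁, Δ₂, p₁, p₂, hs1, hs2, hΔ, hp⟩ := ih Γ₁' Γ₂ hGa
      exact ⟨Δ₁ + Δ', Δ₂, p₁ + p', p₂, hre ▸ Ders.cons hd hs1, hs2,
        by rw [hΔ, add_right_comm], by omega⟩
    · refine ?_
      set Γ₂' : Fin n → Multiset D := fun j => if j = k then (Γ₂ k).erase β else Γ₂ j with hΓ₂'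
      have hre : Γ₂ = Γ₂' + single k β := by
        funext j
        show Γ₂ j = Γ₂' j + single k β j
        by_cases hj : j = k
        · subst hj
          simp only [hΓ₂', single, if_pos rfl]
          simp only [if_true]
          rw [add_comm, Multiset.singleton_add, Multiset.cons_erase hβ2]
        · simp [hΓ₂', single, hj]
      have hGa : Γ = Γ₁ + Γ₂' := by
        funext j
        show Γ j = Γ₁ j + Γ₂' j
        by_cases hj : j = k
        · subst hj
          have e1 : Γ j + {β} = Γ₁ j + Γ₂ j := by simpa [single] using congrFun h12 j
          have e2 : Γ₂ j = Γ₂' j + {β} := by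
            have := congrFun hre j; simpa [single] using this
          have e3 : Γ j + {β} = (Γ₁ j + Γ₂' j) + {β} := by
            rw [e1, e2, ← add_assoc]
          exact add_right_cancel e3
        · have e1 : Γ j = Γ₁ j + Γ₂ j := by simpa [single, hj] using congrFun h12 j
          rw [e1, hΓ₂']; simp [hj]
      obtain ⟨Δ₁, Δ₂, p₁, p₂, hs1, hs2, hΔ, hp⟩ := ih Γ₁ Γ₂' hGa
      exact ⟨Δ₁, Δ₂ + Δ', p₁, p₂ + p', hs1, hre ▸ Ders.cons hd hs2,
        by rw [hΔ, add_assoc], by omega⟩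

lemma Ders.add {n n' : ℕ} {σ : Fin n → Tm n'} {Δ₁ Δ₂ : Fin n' → Multiset D}
    {Γ₁ Γ₂ : Fin n → Multiset D} {p₁ p₂ : ℕ}
    (h1 : Ders i σ Δ₁ Γ₁ p₁) (h2 : Ders i σ Δ₂ Γ₂ p₂) :
    Ders i σ (Δ₁ + Δ₂) (Γ₁ + Γ₂) (p₁ + p₂) := by
  induction h2 with
  | nil => simpa using h1
  | @cons Δ Γ p k β Δ' p' hd hs ih =>
    simpa [add_assoc] using Ders.cons hd ih

end Subst

section Subst2

variable {D : Type} {i : Multiset D × D → D}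

lemma cons_zero_zero {n : ℕ} :
    (Fin.cons 0 (0 : Fin n → Multiset D) : Fin (n+1) → Multiset D) = 0 := by
  funext j
  refine Fin.cases ?_ ?_ j <;> simp

lemma cons_add_single0 {n : ℕ} (a : Multiset D) (Γ : Fin n → Multiset D) (β : D) :
    (Fin.cons a Γ : Fin (n+1) → Multiset D) + single 0 β = Fin.cons (β ::ₘ a) Γ := by
  rw [single_zero, cons_add_cons, add_zero]
  have h : a + {β} = β ::ₘ a := by rw [add_comm, Multiset.singleton_add]
  rw [h]

/-- Lifting a bag of derivations under a binder. -/
lemma Ders.lift {n n' : ℕ} {σ : Fin n → Tm n'} {Δ : Fin n' → Multiset D}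
    {Γ : Fin n → Multiset D} {p : ℕ} (h : Ders i σ Δ Γ p) :
    Ders i (fun k => Fin.cases (motive := fun _ => Tm (n' + 1)) (.var 0)
        (fun j => (σ j).rename Fin.succ) k)
      (Fin.cons 0 Δ) (Fin.cons 0 Γ) p := by
  induction h with
  | nil => rw [cons_zero_zero, cons_zero_zero]; exact Ders.nil
  | @cons Δ Γ p k β Δ' p' hd hs ih =>
    have hd' : Der i (Fin.cons 0 Δ') ((σ k).rename Fin.succ) β p' := by
      have := der_rename (i := i) hd Fin.succ
      rwa [pushf_succ] at this
    have := Ders.cons (k := Fin.succ k)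
      (σ := fun k => Fin.cases (motive := fun _ => Tm (n' + 1)) (.var 0)
        (fun j => (σ j).rename Fin.succ) k) (by simpa using hd') ih
    rwa [cons_add_cons, single_succ, cons_add_cons, zero_add] at this

/-- Extending a bag of derivations by variable-rule derivations for the `0`-th variable. -/
lemma Ders.extend0 {n n' : ℕ} {σ : Fin (n+1) → Tm (n'+1)} (hσ0 : σ 0 = Tm.var 0)
    {Δ : Fin (n'+1) → Multiset D} {Γ : Fin (n+1) → Multiset D} {p : ℕ}
    (h : Ders i σ Δ Γ p) (a : Multiset D) :
    Ders i σ (Δ + Fin.cons a (0 : Fin n' → Multiset D)) (Γ + Fin.cons a (0 : Fin n → Multiset D)) p := by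
  induction a using Multiset.induction with
  | empty => simpa [cons_zero_zero] using h
  | cons β a ih =>
    have hd : Der i (single 0 β) (σ 0) β 0 := by rw [hσ0]; exact Der.var 0 β
    have := Ders.cons hd ih
    rwa [add_assoc, add_assoc, cons_add_single0, cons_add_single0, add_zero] at this

/-- An environment induction principle. -/
lemma env_induction {n : ℕ} {P : (Fin n → Multiset D) → Prop} (h0 : P 0)
    (hstep : ∀ Γ (k : Fin n) β, P Γ → P (Γ + single k β)) : ∀ Γ, P Γ := by
  classical
  intro Γ
  generalize hc : (∑ k, Multiset.card (Γ k)) = c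
  induction c generalizing Γ with
  | zero =>
    have : Γ = 0 := by
      funext j
      have := Finset.sum_eq_zero_iff.mp hc j (Finset.mem_univ j)
      simpa using Multiset.card_eq_zero.mp this
    exact this ▸ h0
  | succ c ihc =>
    have hex : ∃ k, Γ k ≠ 0 := by
      by_contra hall
      push_neg at hall
      simp only [hall, Multiset.card_zero, Finset.sum_const_zero] at hc
      omega
    obtain ⟨k, hk⟩ := hex
    obtain ⟨β, hβ⟩ := Multiset.exists_mem_of_ne_zero hk
    set Γ' : Fin n → Multiset D := Function.update Γ k ((Γ k).erase β) with hΓ'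
    have hre : Γ = Γ' + single k β := by
      funext j
      show Γ j = Γ' j + single k β j
      by_cases hj : j = k
      · subst hj
        simp only [hΓ', Function.update_self, single, if_pos rfl, if_true]
        rw [add_comm, Multiset.singleton_add, Multiset.cons_erase hβ]
      · simp [hΓ', Function.update_of_ne hj, single, hj]
    have hcard : (∑ j, Multiset.card (Γ' j)) = c := by
      have hstepc : ∀ j : Fin n, Multiset.card (Γ j) = Multiset.card (Γ' j) + (if j = k then 1 else 0) := by
        intro j
        by_cases hj : j = k
        · subst hj
          have hpos : 0 < Multiset.card (Γ j) := Multiset.card_pos.mpr hk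
          simp only [hΓ', Function.update_self, if_pos rfl, Multiset.card_erase_of_mem hβ,
            if_true, Nat.pred_eq_sub_one]
          omega
        · simp [hΓ', Function.update_of_ne hj, hj]
      have hsum : ∑ j, Multiset.card (Γ j)
          = (∑ j, Multiset.card (Γ' j)) + ∑ j, (if j = k then 1 else 0) := by
        rw [← Finset.sum_add_distrib]
        exact Finset.sum_congr rfl fun j _ => hstepc j
      have hone : (∑ j : Fin n, (if j = k then 1 else 0)) = 1 := by simp
      omega
    rw [hre]
    exact hstep _ _ _ (ihc Γ' hcard)

lemma ders_cast {n n' : ℕ} {σ : Fin n → Tm n'} {Δ Δ' : Fin n' → Multiset D}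
    {Γ Γ' : Fin n → Multiset D} {p p' : ℕ} (h : Ders i σ Δ Γ p) (hΔ : Δ = Δ')
    (hΓ : Γ = Γ') (hp : p = p') : Ders i σ Δ' Γ' p' := hΔ ▸ hΓ ▸ hp ▸ h

lemma ders_var_part {n n' : ℕ} {σ : Fin (n+1) → Tm n'} {g : Fin n → Fin n'}
    (hσ : ∀ k : Fin n, σ k.succ = Tm.var (g k)) (Γ : Fin n → Multiset D) :
    Ders i σ (pushf g Γ) (Fin.cons 0 Γ) 0 := by
  induction Γ using env_induction with
  | h0 => rw [pushf_zero, cons_zero_zero]; exact Ders.nil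
  | hstep Γ k β ih =>
    have hd : Der i (single (g k) β) (σ k.succ) β 0 := by rw [hσ k]; exact Der.var (g k) β
    have := Ders.cons hd ih
    rwa [single_succ, cons_add_cons, zero_add, ← pushf_single g k β, ← pushf_add, add_zero] at this

/-- The argument part of a substitution bag. -/
lemma ders_arg_part {n n' : ℕ} {σ : Fin (n+1) → Tm n'} {N : Tm n'} (hσ0 : σ 0 = N)
    (l : List ((Fin n' → Multiset D) × D × ℕ)) (hl : ∀ q ∈ l, Der i q.1 N q.2.1 q.2.2) :
    Ders i σ ((l.map (fun q => q.1)).sum)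
      (Fin.cons (↑(l.map (fun q => q.2.1)) : Multiset D) 0)
      ((l.map (fun q => q.2.2)).sum) := by
  induction l with
  | nil =>
    simp only [List.map_nil, List.sum_nil, Multiset.coe_nil]
    rw [cons_zero_zero]
    exact Ders.nil
  | cons q l ih =>
    have hd : Der i q.1 (σ 0) q.2.1 q.2.2 := by rw [hσ0]; exact hl q (List.mem_cons_self)
    have := Ders.cons (k := 0) hd (ih fun q hq => hl q (List.mem_cons_of_mem _ hq))
    rw [cons_add_single0] at this
    simp only [List.map_cons, List.sum_cons]
    have hms : (↑(q.2.1 :: l.map fun q => q.2.1) : Multiset D)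
        = q.2.1 ::ₘ ↑(l.map fun q => q.2.1) := rfl
    rw [hms]
    refine ders_cast this ?_ rfl ?_
    · rw [add_comm]
    · omega

end Subst2

section Subst3

variable {D : Type} {i : Multiset D × D → D}

lemma pieces {n n' : ℕ} {σ : Fin n → Tm n'} {N : Tm n} :
    ∀ (l : List ((Fin n → Multiset D) × D × ℕ))
      (_ : ∀ q ∈ l, ∀ {Δ : Fin n' → Multiset D} {p : ℕ},
        Ders i σ Δ q.1 p → Der i Δ (N.subst σ) q.2.1 (q.2.2 + p))
      {Δr : Fin n' → Multiset D} {pr : ℕ},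
      Ders i σ Δr ((l.map (fun q => q.1)).sum) pr →
      ∃ l' : List ((Fin n' → Multiset D) × D × ℕ),
        l'.map (fun q => q.2.1) = l.map (fun q => q.2.1) ∧
        (∀ q ∈ l', Der i q.1 (N.subst σ) q.2.1 q.2.2) ∧
        (l'.map (fun q => q.1)).sum = Δr ∧
        (l'.map (fun q => q.2.2)).sum = (l.map (fun q => q.2.2)).sum + pr := by
  intro l
  induction l with
  | nil =>
    intro _ Δr pr hs
    simp only [List.map_nil, List.sum_nil] at hs
    obtain ⟨h1, h2⟩ := hs.zero_inv
    exact ⟨[], by simp, by simp, by simp [h1], by simp [h2]⟩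
  | cons q l ih =>
    intro hrec Δr pr hs
    simp only [List.map_cons, List.sum_cons] at hs
    obtain ⟨Δq, Δrest, pq, prest, hsq, hsrest, hΔ, hp⟩ := hs.split q.1 ((l.map (fun q => q.1)).sum) rfl
    have hq : Der i Δq (N.subst σ) q.2.1 (q.2.2 + pq) :=
      hrec q (List.mem_cons_self) hsq
    obtain ⟨l'', hty, hders, henv, hmsr⟩ :=
      ih (fun q' hq' => hrec q' (List.mem_cons_of_mem _ hq')) hsrest
    refine ⟨(Δq, q.2.1, q.2.2 + pq) :: l'', ?_, ?_, ?_, ?_⟩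
    · simp [hty]
    · intro q' hq'
      rcases List.mem_cons.mp hq' with h | h
      · subst h; exact hq
      · exact hders q' h
    · simp only [List.map_cons, List.sum_cons, henv, hΔ]
    · simp only [List.map_cons, List.sum_cons, hmsr]
      omega

theorem der_subst {n : ℕ} {Γ : Fin n → Multiset D} {M : Tm n} {α : D} {m : ℕ}
    (h : Der i Γ M α m) :
    ∀ {n' : ℕ} {σ : Fin n → Tm n'} {Δ : Fin n' → Multiset D} {p : ℕ},
      Ders i σ Δ Γ p → Der i Δ (M.subst σ) α (m + p) := by
  induction h with
  | var k α =>
    intro n' σ Δ p hs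
    simpa [Tm.subst] using hs.single_inv
  | @lam nn Γ a M α m h ih =>
    intro n' σ Δ p hs
    have h1 := (hs.lift (i := i)).extend0 (by simp) a
    rw [cons_add_cons, cons_add_cons] at h1
    simp only [zero_add, add_zero] at h1
    exact Der.lam (ih h1)
  | @app nn Γ₀ M N α m l hM hN ihM ihN =>
    intro n' σ Δ p hs
    obtain ⟨Δ₀, Δr, p₀, pr, hs0, hsr, hΔ, hp⟩ := hs.split Γ₀ ((l.map (fun q => q.1)).sum) rfl
    obtain ⟨l', hty, hders, henv, hmsr⟩ := pieces l (fun q hq => ihN q hq) hsr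
    have hM' : Der i Δ₀ (M.subst σ) (i (↑(l'.map fun q => q.2.1), α)) (m + p₀) := by
      rw [hty]; exact ihM hs0
    have := Der.app l' hM' hders
    refine der_cast this ?_ ?_
    · rw [henv, hΔ]
    · rw [hmsr]; omega

theorem der_subst1 {n : ℕ} {Γ : Fin n → Multiset D} {a : Multiset D} {M : Tm (n+1)}
    {N : Tm n} {α : D} {m : ℕ} (h : Der i (Fin.cons a Γ) M α m)
    (l : List ((Fin n → Multiset D) × D × ℕ)) (ha : (↑(l.map fun q => q.2.1) : Multiset D) = a)
    (hl : ∀ q ∈ l, Der i q.1 N q.2.1 q.2.2) :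
    Der i (Γ + (l.map (fun q => q.1)).sum) (M.subst1 N) α (m + (l.map (fun q => q.2.2)).sum) := by
  have hpid : pushf (id : Fin n → Fin n) Γ = Γ := by
    funext j
    simp only [pushf, id_eq]
    rw [Finset.sum_eq_single j]
    · simp
    · intro b _ hb; simp [hb]
    · simp
  have h1 : Ders i (Fin.cases (motive := fun _ => Tm n) N Tm.var) Γ (Fin.cons 0 Γ) 0 := by
    have := ders_var_part (i := i) (σ := Fin.cases (motive := fun _ => Tm n) N Tm.var)
      (g := id) (fun k => by simp) Γ
    rwa [hpid] at this
  have h2 := ders_arg_part (i := i) (σ := Fin.cases (motive := fun _ => Tm n) N Tm.var)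
    (by simp) l hl
  rw [ha] at h2
  have h3 := Ders.add h1 h2
  rw [cons_add_cons, zero_add, add_zero, zero_add] at h3
  exact der_subst h h3

end Subst3

section BotFreeBeta

lemma botFree_rename : ∀ {n m : ℕ} (f : Fin n → Fin m) {M : Tm n},
    BotFree M → BotFree (M.rename f) := by
  intro n m f M
  induction M generalizing m with
  | var k => intro _; trivial
  | lam M ih => intro h; exact ih _ h
  | app M N ihM ihN => intro h; exact ⟨ihM _ h.1, ihN _ h.2⟩
  | bot => intro h; exact h.elim

lemma botFree_subst : ∀ {n m : ℕ} (σ : Fin n → Tm m) {M : Tm n},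
    BotFree M → (∀ k, BotFree (σ k)) → BotFree (M.subst σ) := by
  intro n m σ M
  induction M generalizing m with
  | var k => intro _ hσ; exact hσ k
  | lam M ih =>
    intro h hσ
    refine ih _ h fun k => ?_
    refine Fin.cases ?_ ?_ k
    · trivial
    · intro j; exact botFree_rename Fin.succ (hσ j)
  | app M N ihM ihN => intro h hσ; exact ⟨ihM _ h.1 hσ, ihN _ h.2 hσ⟩
  | bot => intro h; exact h.elim

lemma botFree_beta {n : ℕ} {M M' : Tm n} (h : Beta M M') (hM : BotFree M) : BotFree M' := by
  induction h with
  | redex M N =>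
    exact botFree_subst _ hM.1 fun k => Fin.cases hM.2 (fun j => trivial) k
  | appL h ih => exact ⟨ih hM.1, hM.2⟩
  | appR h ih => exact ⟨hM.1, ih hM.2⟩
  | lam h ih => exact ih hM

lemma eqvGen_congr {n m : ℕ} (f : Tm n → Tm m)
    (hf : ∀ a b, Beta a b → Beta (f a) (f b)) {M N : Tm n}
    (h : Relation.EqvGen (fun a b : Tm n => Beta a b) M N) :
    Relation.EqvGen (fun a b : Tm m => Beta a b) (f M) (f N) := by
  induction h with
  | rel a b hab => exact Relation.EqvGen.rel _ _ (hf a b hab)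
  | refl a => exact Relation.EqvGen.refl _
  | symm a b _ ih => exact Relation.EqvGen.symm _ _ ih
  | trans a b c _ _ ih1 ih2 => exact Relation.EqvGen.trans _ _ _ ih1 ih2

/-- `M` is not a λ-abstraction. -/
def NotLam {n : ℕ} : Tm n → Prop
  | .lam _ => False
  | _ => True

lemma normal_var {n : ℕ} (k : Fin n) : ∀ P, ¬ Beta (.var k) P := by
  intro P h; cases h

lemma normal_lam {n : ℕ} {M : Tm (n+1)} (h : ∀ P, ¬ Beta M P) :
    ∀ P, ¬ Beta (Tm.lam M) P := by
  intro P hP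
  cases hP with
  | lam h' => exact h _ h'

lemma normal_app {n : ℕ} {M N : Tm n} (hM : ∀ P, ¬ Beta M P) (hN : ∀ P, ¬ Beta N P)
    (hnl : NotLam M) : ∀ P, ¬ Beta (Tm.app M N) P := by
  intro P hP
  cases hP with
  | redex M N => exact hnl
  | appL h => exact hM _ h
  | appR h => exact hN _ h

end BotFreeBeta

section ETyLemmas

lemma occ_node_iff {p : Bool} {l : List PreE} {t : PreE} :
    Occ p (.node l t) ↔ (p = false ∧ l = []) ∨ Occ p t ∨ ∃ β ∈ l, Occ (!p) β := by
  constructor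
  · intro h
    cases h with
    | negEmpty t => exact Or.inl ⟨rfl, rfl⟩
    | tail h => exact Or.inr (Or.inl h)
    | arg h hm => exact Or.inr (Or.inr ⟨_, hm, h⟩)
  · rintro (⟨hp, hl⟩ | h | ⟨β, hm, h⟩)
    · subst hp hl; exact Occ.negEmpty t
    · exact Occ.tail h
    · exact Occ.arg h hm

lemma occ_eqv {s t : PreE} (h : EqvE s t) : ∀ p, Occ p s ↔ Occ p t := by
  induction h with
  | refl t => intro p; rfl
  | symm _ ih => intro p; exact (ih p).symm
  | trans _ _ ih1 ih2 => intro p; exact (ih1 p).trans (ih2 p)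
  | @perm l₁ l₂ t hp =>
    intro p
    rw [occ_node_iff, occ_node_iff]
    have h1 : l₁ = [] ↔ l₂ = [] := by
      constructor
      · intro h; subst h; exact (hp.nil_eq).symm
      · intro h; subst h; exact hp.eq_nil
    have h2 : (∃ β ∈ l₁, Occ (!p) β) ↔ ∃ β ∈ l₂, Occ (!p) β := by
      constructor <;> rintro ⟨β, hm, hb⟩
      · exact ⟨β, hp.mem_iff.mp hm, hb⟩
      · exact ⟨β, hp.mem_iff.mpr hm, hb⟩
    rw [h1, h2]
  | @congHead l t₁ t₂ _ ih =>
    intro p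
    rw [occ_node_iff, occ_node_iff, ih p]
  | @congArg x y l t _ ih =>
    intro p
    rw [occ_node_iff, occ_node_iff]
    have h2 : (∃ β ∈ x :: l, Occ (!p) β) ↔ ∃ β ∈ y :: l, Occ (!p) β := by
      constructor <;> rintro ⟨β, hm, hb⟩
      · rcases List.mem_cons.mp hm with h | h
        · subst h; exact ⟨y, List.mem_cons_self, (ih (!p)).mp hb⟩
        · exact ⟨β, List.mem_cons_of_mem _ h, hb⟩
      · rcases List.mem_cons.mp hm with h | h
        · subst h; exact ⟨x, List.mem_cons_self, (ih (!p)).mpr hb⟩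
        · exact ⟨β, List.mem_cons_of_mem _ h, hb⟩
    rw [h2]
    simp

lemma occQ_mk {p : Bool} {t : PreE} : OccQ p (Quotient.mk ESetoid t) ↔ Occ p t := by
  constructor
  · rintro ⟨t', ht', h⟩
    have : EqvE t' t := Quotient.exact ht'.symm
    exact (occ_eqv this p).mp h
  · intro h
    exact ⟨t, rfl, h⟩

lemma occ_arrE_iff {p : Bool} {a : Multiset ETy} {α : ETy} :
    OccQ p (arrE (a, α)) ↔ (p = false ∧ a = 0) ∨ OccQ p α ∨ ∃ β ∈ a, OccQ (!p) β := by
  show OccQ p (Quotient.mk ESetoid (.node (a.toList.map Quotient.out) α.out)) ↔ _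
  rw [occQ_mk, occ_node_iff]
  have h1 : a.toList.map Quotient.out = [] ↔ a = 0 := by
    exact List.map_eq_nil_iff.trans Multiset.toList_eq_nil
  have h2 : Occ p α.out ↔ OccQ p α := by
    conv_rhs => rw [← α.out_eq]
    rw [occQ_mk]
  have h3 : (∃ β ∈ a.toList.map Quotient.out, Occ (!p) β) ↔ ∃ β ∈ a, OccQ (!p) β := by
    constructor
    · rintro ⟨β, hm, hb⟩
      replace hm := List.mem_map.mp hm
      obtain ⟨γ, hγ, rfl⟩ := hm
      refine ⟨γ, (Multiset.mem_toList).mp hγ, ?_⟩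
      rw [← γ.out_eq, occQ_mk]
      exact hb
    · rintro ⟨γ, hγ, hb⟩
      refine ⟨γ.out, List.mem_map.mpr ⟨γ, Multiset.mem_toList.mpr hγ, rfl⟩, ?_⟩
      rw [← γ.out_eq, occQ_mk] at hb
      exact hb
  rw [h1, h2, h3]

/-- The class of a pre-type in `E`. -/
def mkE (t : PreE) : ETy := Quotient.mk ESetoid t

/-- Decomposition of a pre-type, invariant under the congruence. -/
def toPair : PreE → Option (Multiset ETy × ETy)
  | .atom _ => none
  | .node l t => some ((↑(l.map mkE) : Multiset ETy), mkE t)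

lemma toPair_eqv {s t : PreE} (h : EqvE s t) : toPair s = toPair t := by
  induction h with
  | refl t => rfl
  | symm _ ih => exact ih.symm
  | trans _ _ ih1 ih2 => exact ih1.trans ih2
  | @perm l₁ l₂ t hp =>
    simp only [toPair, Option.some_inj, Prod.mk.injEq]
    exact ⟨Multiset.coe_eq_coe.mpr (hp.map _), trivial⟩
  | @congHead l t₁ t₂ h _ =>
    simp only [toPair, Option.some_inj, Prod.mk.injEq]
    exact ⟨trivial, Quot.sound h⟩
  | @congArg x y l t h _ =>
    simp only [toPair, List.map_cons, Option.some_inj, Prod.mk.injEq]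
    have : mkE x = mkE y := Quot.sound h
    rw [this]
    exact ⟨rfl, trivial⟩

lemma map_mk_out (a : Multiset ETy) :
    (↑((a.toList.map Quotient.out).map mkE) : Multiset ETy) = a := by
  erw [List.map_map]
  have : a.toList.map (mkE ∘ Quotient.out) = a.toList.map id := by
    refine List.map_congr_left fun γ _ => ?_
    simp [mkE, Quotient.out_eq]; rfl
  rw [this, List.map_id, Multiset.coe_toList]

lemma arrE_inj {a b : Multiset ETy} {α β : ETy} (h : arrE (a, α) = arrE (b, β)) :
    a = b ∧ α = β := by
  have hx : EqvE (.node (a.toList.map Quotient.out) α.out)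
      (.node (b.toList.map Quotient.out) β.out) := Quotient.exact h
  have := toPair_eqv hx
  simp only [toPair, Option.some_inj, Prod.mk.injEq] at this
  obtain ⟨h1, h2⟩ := this
  rw [map_mk_out, map_mk_out] at h1
  simp only [mkE, Quotient.out_eq] at h2
  exact ⟨h1, (Quotient.out_eq α).symm.trans (h2.trans (Quotient.out_eq β))⟩

end ETyLemmas

section Main

lemma list_sum_apply {n : ℕ} (k : Fin n) (l : List (Fin n → Multiset ETy)) :
    l.sum k = (l.map (fun f => f k)).sum := by
  induction l with
  | nil => rfl
  | cons f l ih => simp only [List.sum_cons, List.map_cons, Pi.add_apply, ih]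

lemma lam_or_notLam {n : ℕ} (P : Tm n) : (∃ R : Tm (n+1), P = .lam R) ∨ NotLam P := by
  cases P with
  | lam R => exact Or.inl ⟨R, rfl⟩
  | var k => exact Or.inr trivial
  | app _ _ => exact Or.inr trivial
  | bot => exact Or.inr trivial

lemma Blem (m : ℕ)
    (IH : ∀ m', m' < m → ∀ {n : ℕ} (M : Tm n) (Γ : Fin n → Multiset ETy) (α : ETy),
      Der arrE Γ M α m' → BotFree M → ¬ OccQ true α →
      (∀ k : Fin n, ∀ β ∈ Γ k, ¬ OccQ false β) →
      ∃ N : Tm n, BotFree N ∧ Relation.EqvGen (fun a b : Tm n => Beta a b) M N ∧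
        ∀ P, ¬ Beta N P) :
    ∀ {n : ℕ} (M : Tm n) (Γ : Fin n → Multiset ETy) (δ : ETy) (m₁ : ℕ),
      m₁ ≤ m → Der arrE Γ M δ m₁ → BotFree M → NotLam M →
      (∀ k : Fin n, ∀ β ∈ Γ k, ¬ OccQ false β) →
      (∃ M' m', Beta M M' ∧ BotFree M' ∧ Der arrE Γ M' δ m' ∧ m' < m₁) ∨
      (¬ OccQ false δ ∧ ∃ N : Tm n, BotFree N ∧ NotLam N ∧
        Relation.EqvGen (fun a b : Tm n => Beta a b) M N ∧ ∀ P, ¬ Beta N P) := by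
  intro n M
  induction M with
  | var k =>
    intro Γ δ m₁ hm hd hbf hnl hΓ
    right
    cases hd
    refine ⟨hΓ k δ (by simp [single]), .var k, trivial, trivial, Relation.EqvGen.refl _,
      normal_var k⟩
  | lam M ih =>
    intro Γ δ m₁ hm hd hbf hnl hΓ
    exact hnl.elim
  | bot =>
    intro Γ δ m₁ hm hd hbf hnl hΓ
    exact hbf.elim
  | app P Q ihP ihQ =>
    intro Γ δ m₁ hm hd hbf hnl hΓ
    cases hd with
    | @app _ Γ₀ _ _ _ mP l hP hQ =>
      have hΓ₀ : ∀ k, ∀ β ∈ Γ₀ k, ¬ OccQ false β := by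
        intro k β hβ
        refine hΓ k β ?_
        show β ∈ Γ₀ k + (List.map Prod.fst l).sum k
        exact Multiset.mem_add.mpr (Or.inl hβ)
      have hsub : ∀ q ∈ l, ∀ k, ∀ β ∈ q.1 k, ¬ OccQ false β := by
        intro q hq k β hβ
        refine hΓ k β ?_
        show β ∈ Γ₀ k + (List.map Prod.fst l).sum k
        refine Multiset.mem_add.mpr (Or.inr ?_)
        have hle : q.1 k ≤ (List.map Prod.fst l).sum k := by
          rw [list_sum_apply]
          refine List.single_le_sum (fun x _ => ?_) _ ?_
          · exact Multiset.zero_le x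
          · rw [List.map_map]
            exact List.mem_map.mpr ⟨q, hq, rfl⟩
        exact Multiset.mem_of_le hle hβ
      rcases lam_or_notLam P with ⟨R, rfl⟩ | hnlP
      · -- head redex
        left
        generalize hT : arrE (↑(l.map fun q => q.2.1), δ) = T at hP
        cases hP with
        | @lam _ _ a _ α' _ hR =>
          obtain ⟨hba, hδα⟩ := arrE_inj hT
          subst hδα
          have hder := der_subst1 (i := arrE) hR l hba hQ
          refine ⟨R.subst1 Q, mP + (l.map (fun q => q.2.2)).sum, Beta.redex R Q,
            botFree_beta (Beta.redex R Q) hbf, hder, by omega⟩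
      · -- neutral head
        have hPP := ihP Γ₀ (arrE (↑(l.map fun q => q.2.1), δ)) mP (by omega) hP hbf.1 hnlP hΓ₀
        rcases hPP with ⟨P', mP', hbeta, hbf', hder', hlt⟩ | ⟨hnocc, NP, hbfN, hnlN, heqv, hnorm⟩
        · left
          exact ⟨.app P' Q, mP' + (l.map (fun q => q.2.2)).sum + 1, Beta.appL hbeta,
            ⟨hbf', hbf.2⟩, Der.app l hder' hQ, by omega⟩
        · right
          rw [occ_arrE_iff] at hnocc
          push_neg at hnocc
          have hbne : (↑(l.map fun q => q.2.1) : Multiset ETy) ≠ 0 := by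
            intro h0
            exact (hnocc.1 rfl h0).elim
          have hδocc : ¬ OccQ false δ := fun h => (hnocc.2.1 h).elim
          have hargs : ∀ β ∈ (↑(l.map fun q => q.2.1) : Multiset ETy), ¬ OccQ true β := by
            intro β hβ h
            exact hnocc.2.2 β hβ h
          have hlne : l ≠ [] := by
            intro h; subst h; simp at hbne
          obtain ⟨q₀, hq₀⟩ := List.exists_mem_of_ne_nil l hlne
          have hq₀ty : q₀.2.1 ∈ (↑(l.map fun q => q.2.1) : Multiset ETy) := by
            rw [Multiset.mem_coe]
            exact List.mem_map.mpr ⟨q₀, hq₀, rfl⟩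
          have hq₀m : q₀.2.2 < m := by
            have h1 : q₀.2.2 ≤ (l.map (fun q => q.2.2)).sum :=
              List.single_le_sum (fun x _ => Nat.zero_le x) _
                (List.mem_map.mpr ⟨q₀, hq₀, rfl⟩)
            omega
          obtain ⟨NQ, hbfQ, heqvQ, hnormQ⟩ := IH q₀.2.2 hq₀m Q q₀.1 q₀.2.1 (hQ q₀ hq₀)
            hbf.2 (hargs q₀.2.1 hq₀ty) (fun k β hβ => hsub q₀ hq₀ k β hβ)
          refine ⟨hδocc, .app NP NQ, ⟨hbfN, hbfQ⟩, trivial, ?_, normal_app hnorm hnormQ hnlN⟩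
          refine Relation.EqvGen.trans _ (Tm.app NP Q) _ ?_ ?_
          · exact eqvGen_congr (fun X => Tm.app X Q) (fun a b h => Beta.appL h) heqv
          · exact eqvGen_congr (fun Y => Tm.app NP Y) (fun a b h => Beta.appR h) heqvQ

lemma Amain : ∀ (m : ℕ) {n : ℕ} (M : Tm n) (Γ : Fin n → Multiset ETy) (α : ETy),
    Der arrE Γ M α m → BotFree M → ¬ OccQ true α →
    (∀ k : Fin n, ∀ β ∈ Γ k, ¬ OccQ false β) →
    ∃ N : Tm n, BotFree N ∧ Relation.EqvGen (fun a b : Tm n => Beta a b) M N ∧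
      ∀ P, ¬ Beta N P := by
  intro m
  induction m using Nat.strong_induction_on with
  | _ m IHm =>
  intro n M
  induction M with
  | var k =>
    intro Γ α hd hbf hα hΓ
    exact ⟨.var k, trivial, Relation.EqvGen.refl _, normal_var k⟩
  | lam M ihM =>
    intro Γ α hd hbf hα hΓ
    cases hd with
    | @lam _ _ a _ α₀ _ hd' =>
      rw [occ_arrE_iff] at hα
      push_neg at hα
      have hα₀ : ¬ OccQ true α₀ := fun h => (hα.2.1 h).elim
      have hcons : ∀ k, ∀ β ∈ (Fin.cons a Γ : Fin _ → Multiset ETy) k, ¬ OccQ false β := by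
        intro k
        refine Fin.cases ?_ ?_ k
        · intro β hβ h
          exact hα.2.2 β (by simpa using hβ) h
        · intro j β hβ
          exact hΓ j β (by simpa using hβ)
      obtain ⟨N', hbf', heqv', hnorm'⟩ := ihM (Fin.cons a Γ) α₀ hd' hbf hα₀ hcons
      exact ⟨.lam N', hbf', eqvGen_congr Tm.lam (fun a b h => Beta.lam h) heqv',
        normal_lam hnorm'⟩
  | bot =>
    intro Γ α hd hbf hα hΓ
    exact hbf.elim
  | app P Q ihP ihQ =>
    intro Γ α hd hbf hα hΓ
    rcases Blem m IHm (.app P Q) Γ α m le_rfl hd hbf trivial hΓ with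
      ⟨M', m', hb, hbf', hd', hlt⟩ | ⟨_, N, h1, _, h2, h3⟩
    · obtain ⟨N, hN1, hN2, hN3⟩ := IHm m' hlt M' Γ α hd' hbf' hα hΓ
      exact ⟨N, hN1, Relation.EqvGen.trans _ _ _ (Relation.EqvGen.rel _ _ hb) hN2, hN3⟩
    · exact ⟨N, h1, h2, h3⟩

end Main

/-- Conversely, if a λ-term is typable in `E` with a type in which the empty multiset
does not occur positively and an environment in whose types the empty multiset does not
occur negatively, then it is β-normalizable. -/
theorem stmt_16 {n : ℕ} (M : Tm n) (hM : BotFree M)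
    {Γ : Fin n → Multiset ETy} {α : ETy} {m : ℕ}
    (hd : Der arrE Γ M α m) (hα : ¬ OccQ true α)
    (hΓ : ∀ (k : Fin n), ∀ β ∈ Γ k, ¬ OccQ false β) :
    ∃ N : Tm n, BotFree N ∧
      Relation.EqvGen (fun a b : Tm n => Beta a b) M N ∧ ∀ P, ¬ Beta N P := by
  exact Amain m M Γ α hd hM hα hΓ
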